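/- Let H be a connected graph and let H' be obtained from H by adding four new vertices x, v_1, x_1, v_1' together with the following new edges: two edges e_0, e_1 joining x to two distinct vertices of H; the edges x v_1 and v_1 b, where b is a vertex of H; two edges e_0', e_1' joining x_1 to two distinct vertices of H; and the edges x_1 v_1' and v_1' b', where b' is a vertex of H. Then rc(H') ≤ rc(H) + 2. -/

import Mathlib

open SimpleGraph

/-- The rainbow connection number of a graph `G`: the least `k` such that the edges of `G`
can be coloured with colours `0, …, k-1` so that any two distinct vertices are joined by a
path whose edges receive pairwise distinct colours. -/
noncomputable def rc {V : Type*} (G : SimpleGraph V) : ℕ :=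
  sInf {k : ℕ | ∃ c : Sym2 V → ℕ, (∀ e ∈ G.edgeSet, c e < k) ∧
    ∀ u v : V, u ≠ v → ∃ p : G.Walk u v, p.IsPath ∧ (p.edges.map c).Nodup}

namespace RC3B

variable {V : Type*}

/-- helper: concat preserves paths -/
lemma concat_isPath {G : SimpleGraph V} {u v w : V} {p : G.Walk u v}
    (h : G.Adj v w) (hp : p.IsPath) (hw : w ∉ p.support) : (p.concat h).IsPath := by
  rw [← SimpleGraph.Walk.isPath_reverse_iff, SimpleGraph.Walk.reverse_concat,
    SimpleGraph.Walk.cons_isPath_iff]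
  exact ⟨hp.reverse, by simpa using hw⟩

/-- helper: reverse a rainbow path -/
lemma revEx {W : Type*} {G : SimpleGraph W} {c : Sym2 W → ℕ} {u v : W}
    (h : ∃ p : G.Walk u v, p.IsPath ∧ (p.edges.map c).Nodup) :
    ∃ p : G.Walk v u, p.IsPath ∧ (p.edges.map c).Nodup := by
  obtain ⟨p, hp, hn⟩ := h
  refine ⟨p.reverse, hp.reverse, ?_⟩
  rw [SimpleGraph.Walk.edges_reverse, List.map_reverse]
  exact List.nodup_reverse.mpr hn

def HG (H : SimpleGraph V) (c₀ c₁ b d₀ d₁ b' : V) : SimpleGraph (V ⊕ Fin 4) :=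
  SimpleGraph.fromRel (fun u v : V ⊕ Fin 4 =>
        (∃ p q, u = Sum.inl p ∧ v = Sum.inl q ∧ H.Adj p q) ∨
        (u = Sum.inl c₀ ∧ v = Sum.inr 0) ∨
        (u = Sum.inl c₁ ∧ v = Sum.inr 0) ∨
        (u = Sum.inr 0 ∧ v = Sum.inr 1) ∨
        (u = Sum.inr 1 ∧ v = Sum.inl b) ∨
        (u = Sum.inl d₀ ∧ v = Sum.inr 2) ∨
        (u = Sum.inl d₁ ∧ v = Sum.inr 2) ∨
        (u = Sum.inr 2 ∧ v = Sum.inr 3) ∨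
        (u = Sum.inr 3 ∧ v = Sum.inl b'))

variable {H : SimpleGraph V} {c₀ c₁ b d₀ d₁ b' : V}

lemma adj_inl (h : H.Adj a b2) : (HG H c₀ c₁ b d₀ d₁ b').Adj (Sum.inl a) (Sum.inl b2) := by
  rw [HG, fromRel_adj]
  exact ⟨by simpa using h.ne, Or.inl (Or.inl ⟨a, b2, rfl, rfl, h⟩)⟩

lemma adj_of_inl_inl (h : (HG H c₀ c₁ b d₀ d₁ b').Adj (Sum.inl a) (Sum.inl b2)) : H.Adj a b2 := by
  rw [HG, fromRel_adj] at h
  rcases h with ⟨-, h | h⟩ <;>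
      rcases h with ⟨p, q, hp, hq, hadj⟩ | h | h | h | h | h | h | h | h <;> simp_all
  exact hadj.symm


lemma adj_c₀x : (HG H c₀ c₁ b d₀ d₁ b').Adj (Sum.inl c₀) (Sum.inr 0) := by
  rw [HG, fromRel_adj]
  exact ⟨by simp, Or.inl (Or.inr (Or.inl ⟨rfl, rfl⟩))⟩

lemma adj_xv₁ : (HG H c₀ c₁ b d₀ d₁ b').Adj (Sum.inr 0) (Sum.inr 1) := by
  rw [HG, fromRel_adj]
  exact ⟨by simp, Or.inl (Or.inr (Or.inr (Or.inr (Or.inl ⟨rfl, rfl⟩))))⟩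

lemma adj_v₁b : (HG H c₀ c₁ b d₀ d₁ b').Adj (Sum.inr 1) (Sum.inl b) := by
  rw [HG, fromRel_adj]
  exact ⟨by simp, Or.inl (Or.inr (Or.inr (Or.inr (Or.inr (Or.inl ⟨rfl, rfl⟩)))))⟩

lemma adj_d₀x₁ : (HG H c₀ c₁ b d₀ d₁ b').Adj (Sum.inl d₀) (Sum.inr 2) := by
  rw [HG, fromRel_adj]
  refine ⟨by simp, Or.inl ?_⟩
  exact Or.inr (Or.inr (Or.inr (Or.inr (Or.inr (Or.inl ⟨rfl, rfl⟩)))))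

lemma adj_x₁v₁' : (HG H c₀ c₁ b d₀ d₁ b').Adj (Sum.inr 2) (Sum.inr 3) := by
  rw [HG, fromRel_adj]
  refine ⟨by simp, Or.inl ?_⟩
  exact Or.inr (Or.inr (Or.inr (Or.inr (Or.inr (Or.inr (Or.inr (Or.inl ⟨rfl, rfl⟩)))))))

lemma adj_v₁'b' : (HG H c₀ c₁ b d₀ d₁ b').Adj (Sum.inr 3) (Sum.inl b') := by
  rw [HG, fromRel_adj]
  refine ⟨by simp, Or.inl ?_⟩
  exact Or.inr (Or.inr (Or.inr (Or.inr (Or.inr (Or.inr (Or.inr (Or.inr ⟨rfl, rfl⟩)))))))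


lemma nodup_aux2 {k : ℕ} {l : List ℕ} (h : ∀ x ∈ l, x < k) (hl : l.Nodup) :
    (k :: l).Nodup := by
  rw [List.nodup_cons]
  exact ⟨fun hm => absurd (h _ hm) (by omega), hl⟩

lemma nodup_aux {k : ℕ} {l : List ℕ} (h : ∀ x ∈ l, x < k) (hl : l.Nodup) :
    (k :: (l ++ [k + 1])).Nodup := by
  rw [List.nodup_cons, List.nodup_append]
  refine ⟨?_, hl, by simp, ?_⟩
  · rw [List.mem_append]
    rintro (hm | hm)
    · exact absurd (h _ hm) (by omega)
    · simp at hm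
  · intro x hx y hy
    simp at hy
    subst hy
    have := h _ hx
    omega

def gcol (cH : Sym2 V → ℕ) (k : ℕ) : V ⊕ Fin 4 → V ⊕ Fin 4 → ℕ
  | Sum.inl a, Sum.inl a' => cH s(a, a')
  | Sum.inl _, Sum.inr i => if (i : ℕ) < 2 then k else k + 1
  | Sum.inr i, Sum.inl _ => if (i : ℕ) < 2 then k else k + 1
  | Sum.inr _, Sum.inr _ => k

lemma gcol_symm (cH : Sym2 V → ℕ) (k : ℕ) :
    ∀ u v, gcol cH k u v = gcol cH k v u := by
  rintro (a | i) (a' | j) <;> simp only [gcol]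
  rw [Sym2.eq_swap]

noncomputable def ccol (cH : Sym2 V → ℕ) (k : ℕ) : Sym2 (V ⊕ Fin 4) → ℕ :=
  Sym2.lift ⟨gcol cH k, gcol_symm cH k⟩

lemma ccol_mk (cH : Sym2 V → ℕ) (k : ℕ) (u v : V ⊕ Fin 4) :
    ccol cH k s(u, v) = gcol cH k u v := rfl

lemma lemA (H : SimpleGraph V) (c₀ c₁ b d₀ d₁ b' : V) (k : ℕ) (cH : Sym2 V → ℕ)
    (hb : ∀ e ∈ H.edgeSet, cH e < k)
    (hr : ∀ u v : V, u ≠ v → ∃ p : H.Walk u v, p.IsPath ∧ (p.edges.map cH).Nodup) :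
    ∃ c' : Sym2 (V ⊕ Fin 4) → ℕ, (∀ e ∈ (HG H c₀ c₁ b d₀ d₁ b').edgeSet, c' e < k + 2) ∧
      ∀ u v : V ⊕ Fin 4, u ≠ v → ∃ p : (HG H c₀ c₁ b d₀ d₁ b').Walk u v,
        p.IsPath ∧ (p.edges.map c').Nodup := by
  let homInl : H →g (HG H c₀ c₁ b d₀ d₁ b') := ⟨Sum.inl, fun h => adj_inl h⟩
  -- the lifted rainbow walks inside the copy of H
  have L1 : ∀ a a' : V, ∃ q : (HG H c₀ c₁ b d₀ d₁ b').Walk (Sum.inl a) (Sum.inl a'),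
      q.IsPath ∧ (∀ x ∈ q.edges.map (ccol cH k), x < k) ∧ (q.edges.map (ccol cH k)).Nodup ∧
      ∀ y ∈ q.support, ∃ z, y = Sum.inl z := by
    intro a a'
    by_cases hne : a = a'
    · subst hne
      exact ⟨SimpleGraph.Walk.nil, by simp, by simp, by simp, by simp⟩
    · obtain ⟨p, hp, hnd⟩ := hr a a' hne
      have hedges : (p.map homInl).edges.map (ccol cH k) = p.edges.map cH := by
        rw [SimpleGraph.Walk.edges_map, List.map_map]
        refine List.map_congr_left (fun e he => ?_)
        induction e using Sym2.ind with
        | _ x y => rfl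
      refine ⟨p.map homInl, SimpleGraph.Walk.map_isPath_of_injective Sum.inl_injective hp,
        ?_, ?_, ?_⟩
      · rw [hedges]
        intro x hx
        rw [List.mem_map] at hx
        obtain ⟨e, he, rfl⟩ := hx
        exact hb e (p.edges_subset_edgeSet he)
      · rw [hedges]; exact hnd
      · intro y hy
        rw [SimpleGraph.Walk.support_map, List.mem_map] at hy
        obtain ⟨z, _, rfl⟩ := hy
        exact ⟨z, rfl⟩
  -- one new endpoint
  have OS : ∀ (i : Fin 4) (a t : V),
      (HG H c₀ c₁ b d₀ d₁ b').Adj (Sum.inr i) (Sum.inl a) →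
      ∃ p : (HG H c₀ c₁ b d₀ d₁ b').Walk (Sum.inr i) (Sum.inl t),
        p.IsPath ∧ (p.edges.map (ccol cH k)).Nodup := by
    intro i a t h1
    obtain ⟨q, hq, hlt, hnd, hsup⟩ := L1 a t
    refine ⟨SimpleGraph.Walk.cons h1 q, ?_, ?_⟩
    · rw [SimpleGraph.Walk.cons_isPath_iff]
      refine ⟨hq, fun hmem => ?_⟩
      obtain ⟨z, hz⟩ := hsup _ hmem
      simp at hz
    · rw [SimpleGraph.Walk.edges_cons, List.map_cons]
      have hhead : ccol cH k s(Sum.inr i, Sum.inl a) = if (i : ℕ) < 2 then k else k + 1 := rfl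
      rw [hhead]
      have : ∀ x ∈ q.edges.map (ccol cH k), x < (if (i : ℕ) < 2 then k else k + 1) := by
        intro x hx
        have := hlt x hx
        split <;> omega
      exact nodup_aux2 this hnd
  -- both endpoints new, linked through the copy of H
  have TS : ∀ (i j : Fin 4) (a t : V), (i : ℕ) < 2 → ¬ ((j : ℕ) < 2) →
      (HG H c₀ c₁ b d₀ d₁ b').Adj (Sum.inr i) (Sum.inl a) →
      (HG H c₀ c₁ b d₀ d₁ b').Adj (Sum.inl t) (Sum.inr j) →
      ∃ p : (HG H c₀ c₁ b d₀ d₁ b').Walk (Sum.inr i) (Sum.inr j),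
        p.IsPath ∧ (p.edges.map (ccol cH k)).Nodup := by
    intro i j a t hi hj h1 h2
    obtain ⟨q, hq, hlt, hnd, hsup⟩ := L1 a t
    refine ⟨SimpleGraph.Walk.cons h1 (q.concat h2), ?_, ?_⟩
    · rw [SimpleGraph.Walk.cons_isPath_iff]
      refine ⟨concat_isPath h2 hq (fun hmem => ?_), ?_⟩
      · obtain ⟨z, hz⟩ := hsup _ hmem
        simp at hz
      · rw [SimpleGraph.Walk.support_concat, List.mem_append]
        rintro (hm | hm)
        · obtain ⟨z, hz⟩ := hsup _ hm
          simp at hz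
        · simp at hm
          subst hm
          omega
    · rw [SimpleGraph.Walk.edges_cons, SimpleGraph.Walk.edges_concat, List.concat_eq_append,
        List.map_cons, List.map_append, List.map_singleton]
      have hhead : ccol cH k s(Sum.inr i, Sum.inl a) = k := by
        have : ccol cH k s(Sum.inr i, Sum.inl a) = if (i : ℕ) < 2 then k else k + 1 := rfl
        rw [this, if_pos hi]
      have htail : ccol cH k s(Sum.inl t, Sum.inr j) = k + 1 := by
        have : ccol cH k s(Sum.inl t, Sum.inr j) = if (j : ℕ) < 2 then k else k + 1 := rfl
        rw [this, if_neg hj]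
      rw [hhead, htail]
      exact nodup_aux hlt hnd
  refine ⟨ccol cH k, ?_, ?_⟩
  · intro e
    induction e using Sym2.ind with
    | _ u v =>
      intro he
      rw [(HG H c₀ c₁ b d₀ d₁ b').mem_edgeSet] at he
      rcases u with a | i <;> rcases v with a' | j
      · have : ccol cH k s(Sum.inl a, Sum.inl a') = cH s(a, a') := rfl
        rw [this]
        have := hb _ (H.mem_edgeSet.mpr (adj_of_inl_inl he))
        omega
      · have : ccol cH k s(Sum.inl a, Sum.inr j) = if (j : ℕ) < 2 then k else k + 1 := rfl
        rw [this]; split <;> omega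
      · have : ccol cH k s(Sum.inr i, Sum.inl a') = if (i : ℕ) < 2 then k else k + 1 := rfl
        rw [this]; split <;> omega
      · have : ccol cH k s(Sum.inr i, Sum.inr j) = k := rfl
        rw [this]; omega
  · intro u v huv
    rcases u with a | i <;> rcases v with a' | j
    · obtain ⟨q, hq, _, hnd, _⟩ := L1 a a'
      exact ⟨q, hq, hnd⟩
    · apply revEx
      fin_cases j
      · exact OS 0 c₀ a adj_c₀x.symm
      · exact OS 1 b a adj_v₁b
      · exact OS 2 d₀ a adj_d₀x₁.symm
      · exact OS 3 b' a adj_v₁'b'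
    · fin_cases i
      · exact OS 0 c₀ a' adj_c₀x.symm
      · exact OS 1 b a' adj_v₁b
      · exact OS 2 d₀ a' adj_d₀x₁.symm
      · exact OS 3 b' a' adj_v₁'b'
    · fin_cases i <;> fin_cases j
      · exact absurd rfl huv
      · exact ⟨SimpleGraph.Walk.cons adj_xv₁ SimpleGraph.Walk.nil, by simp, by simp⟩
      · exact TS 0 2 c₀ d₀ (by decide) (by decide) adj_c₀x.symm adj_d₀x₁
      · exact TS 0 3 c₀ b' (by decide) (by decide) adj_c₀x.symm adj_v₁'b'.symm
      · exact revEx ⟨SimpleGraph.Walk.cons adj_xv₁ SimpleGraph.Walk.nil, by simp, by simp⟩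
      · exact absurd rfl huv
      · exact TS 1 2 b d₀ (by decide) (by decide) adj_v₁b adj_d₀x₁
      · exact TS 1 3 b b' (by decide) (by decide) adj_v₁b adj_v₁'b'.symm
      · exact revEx (TS 0 2 c₀ d₀ (by decide) (by decide) adj_c₀x.symm adj_d₀x₁)
      · exact revEx (TS 1 2 b d₀ (by decide) (by decide) adj_v₁b adj_d₀x₁)
      · exact absurd rfl huv
      · exact ⟨SimpleGraph.Walk.cons adj_x₁v₁' SimpleGraph.Walk.nil, by simp, by simp⟩
      · exact revEx (TS 0 3 c₀ b' (by decide) (by decide) adj_c₀x.symm adj_v₁'b'.symm)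
      · exact revEx (TS 1 3 b b' (by decide) (by decide) adj_v₁b adj_v₁'b'.symm)
      · exact revEx ⟨SimpleGraph.Walk.cons adj_x₁v₁' SimpleGraph.Walk.nil, by simp, by simp⟩
      · exact absurd rfl huv


def proj (c₀ b d₀ b' : V) : V ⊕ Fin 4 → V
  | Sum.inl a => a
  | Sum.inr i => if i.val = 0 then c₀ else if i.val = 1 then b else if i.val = 2 then d₀ else b'

open scoped Classical in
noncomputable def bcol (c' : Sym2 (V ⊕ Fin 4) → ℕ) (k : ℕ) (EqL : List (Sym2 V)) :
    Sym2 V → ℕ :=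
  fun e => if e ∈ EqL then k + EqL.idxOf e else c' (Sym2.map Sum.inl e)

lemma lemB (H : SimpleGraph V) (c₀ c₁ b d₀ d₁ b' : V)
    (Q1 : H.Walk c₁ c₀) (Q2 : H.Walk c₀ b) (Q3 : H.Walk d₁ d₀) (Q4 : H.Walk d₀ b')
    (k : ℕ) (c' : Sym2 (V ⊕ Fin 4) → ℕ)
    (hb : ∀ e ∈ (HG H c₀ c₁ b d₀ d₁ b').edgeSet, c' e < k)
    (hr : ∀ u v : V ⊕ Fin 4, u ≠ v → ∃ p : (HG H c₀ c₁ b d₀ d₁ b').Walk u v,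
      p.IsPath ∧ (p.edges.map c').Nodup) :
    ∃ (k' : ℕ) (cH : Sym2 V → ℕ), (∀ e ∈ H.edgeSet, cH e < k') ∧
      ∀ u v : V, u ≠ v → ∃ p : H.Walk u v, p.IsPath ∧ (p.edges.map cH).Nodup := by
  classical
  set EqL : List (Sym2 V) := Q1.edges ++ Q2.edges ++ Q3.edges ++ Q4.edges with hEqL
  refine ⟨k + EqL.length, bcol c' k EqL, ?_, ?_⟩
  · -- the bound
    intro e
    induction e using Sym2.ind with
    | _ a a' =>
      intro he
      by_cases hm : s(a, a') ∈ EqL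
      · rw [bcol, if_pos hm]
        have := List.idxOf_lt_length_iff.mpr hm
        omega
      · rw [bcol, if_neg hm, Sym2.map_pair_eq]
        have hmem : s(Sum.inl a, Sum.inl a') ∈ (HG H c₀ c₁ b d₀ d₁ b').edgeSet :=
          (HG H c₀ c₁ b d₀ d₁ b').mem_edgeSet.mpr (adj_inl (H.mem_edgeSet.mp he))
        have := hb _ hmem
        omega
  · -- the rainbow property
    have seg : ∀ u w : V ⊕ Fin 4, (HG H c₀ c₁ b d₀ d₁ b').Adj u w →
        ∃ s : H.Walk (proj c₀ b d₀ b' u) (proj c₀ b d₀ b' w),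
          ∀ e ∈ s.edges, e ∈ EqL ∨ Sym2.map Sum.inl e = s(u, w) := by
      have aux : ∀ u w : V ⊕ Fin 4,
          ((∃ p q, u = Sum.inl p ∧ w = Sum.inl q ∧ H.Adj p q) ∨
            (u = Sum.inl c₀ ∧ w = Sum.inr 0) ∨
            (u = Sum.inl c₁ ∧ w = Sum.inr 0) ∨
            (u = Sum.inr 0 ∧ w = Sum.inr 1) ∨
            (u = Sum.inr 1 ∧ w = Sum.inl b) ∨
            (u = Sum.inl d₀ ∧ w = Sum.inr 2) ∨
            (u = Sum.inl d₁ ∧ w = Sum.inr 2) ∨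
            (u = Sum.inr 2 ∧ w = Sum.inr 3) ∨
            (u = Sum.inr 3 ∧ w = Sum.inl b')) →
          ∃ s : H.Walk (proj c₀ b d₀ b' u) (proj c₀ b d₀ b' w),
            ∀ e ∈ s.edges, e ∈ EqL ∨ Sym2.map Sum.inl e = s(u, w) := by
        rintro u w (⟨p, q, rfl, rfl, hpq⟩ | ⟨rfl, rfl⟩ | ⟨rfl, rfl⟩ | ⟨rfl, rfl⟩ |
          ⟨rfl, rfl⟩ | ⟨rfl, rfl⟩ | ⟨rfl, rfl⟩ | ⟨rfl, rfl⟩ | ⟨rfl, rfl⟩)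
        · exact ⟨SimpleGraph.Walk.cons hpq SimpleGraph.Walk.nil,
            by simp [proj, Sym2.map_pair_eq]⟩
        · exact ⟨SimpleGraph.Walk.nil, by intro e he; cases he⟩
        · refine ⟨Q1, fun e he => Or.inl ?_⟩
          rw [hEqL]
          simp [he]
          tauto
        · refine ⟨Q2, fun e he => Or.inl ?_⟩
          rw [hEqL]
          simp [he]
          tauto
        · exact ⟨SimpleGraph.Walk.nil, by intro e he; cases he⟩
        · exact ⟨SimpleGraph.Walk.nil, by intro e he; cases he⟩
        · refine ⟨Q3, fun e he => Or.inl ?_⟩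
          rw [hEqL]
          simp [he]
          tauto
        · refine ⟨Q4, fun e he => Or.inl ?_⟩
          rw [hEqL]
          simp [he]
          tauto
        · exact ⟨SimpleGraph.Walk.nil, by intro e he; cases he⟩
      intro u w h
      rw [HG, fromRel_adj] at h
      rcases h.2 with h' | h'
      · exact aux u w h'
      · obtain ⟨s, hs⟩ := aux w u h'
        refine ⟨s.reverse, fun e he => ?_⟩
        rw [SimpleGraph.Walk.edges_reverse, List.mem_reverse] at he
        rcases hs e he with h1 | h1
        · exact Or.inl h1
        · exact Or.inr (by rw [h1, Sym2.eq_swap])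
    have main : ∀ (u w : V ⊕ Fin 4) (p : (HG H c₀ c₁ b d₀ d₁ b').Walk u w),
        ∃ s : H.Walk (proj c₀ b d₀ b' u) (proj c₀ b d₀ b' w),
          ∀ e ∈ s.edges, e ∈ EqL ∨ Sym2.map Sum.inl e ∈ p.edges := by
      intro u w p
      induction p with
      | nil => exact ⟨SimpleGraph.Walk.nil, by simp⟩
      | cons h q ih =>
        obtain ⟨s1, hs1⟩ := seg _ _ h
        obtain ⟨s2, hs2⟩ := ih
        refine ⟨s1.append s2, fun e he => ?_⟩
        rw [SimpleGraph.Walk.edges_append, List.mem_append] at he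
        rcases he with he | he
        · rcases hs1 e he with h1 | h1
          · exact Or.inl h1
          · rw [SimpleGraph.Walk.edges_cons]
            exact Or.inr (h1 ▸ List.mem_cons_self)
        · rcases hs2 e he with h1 | h1
          · exact Or.inl h1
          · rw [SimpleGraph.Walk.edges_cons]
            exact Or.inr (List.mem_cons_of_mem _ h1)
    intro u v huv
    obtain ⟨p, hp, hnd⟩ := hr (Sum.inl u) (Sum.inl v) (by simpa using huv)
    obtain ⟨s, hs⟩ := main _ _ p
    refine ⟨s.bypass, s.bypass_isPath, ?_⟩
    have hlt : ∀ e ∈ p.edges, c' e < k := fun e he => hb e (p.edges_subset_edgeSet he)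
    refine List.Nodup.map_on ?_ s.bypass_isPath.isTrail.edges_nodup
    intro e1 h1 e2 h2 heq
    have h1' := s.edges_bypass_subset h1
    have h2' := s.edges_bypass_subset h2
    by_cases q1 : e1 ∈ EqL <;> by_cases q2 : e2 ∈ EqL
    · simp only [bcol] at heq
      rw [if_pos q1, if_pos q2] at heq
      exact (List.idxOf_inj q1).mp (by omega)
    · have m2 := (hs e2 h2').resolve_left q2
      simp only [bcol] at heq
      rw [if_pos q1, if_neg q2] at heq
      have := hlt _ m2
      omega
    · have m1 := (hs e1 h1').resolve_left q1
      simp only [bcol] at heq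
      rw [if_neg q1, if_pos q2] at heq
      have := hlt _ m1
      omega
    · have m1 := (hs e1 h1').resolve_left q1
      have m2 := (hs e2 h2').resolve_left q2
      simp only [bcol] at heq
      rw [if_neg q1, if_neg q2] at heq
      exact Sym2.map.injective Sum.inl_injective
        (List.inj_on_of_nodup_map hnd m1 m2 heq)

end RC3B

/-- Case 3 (second subcase).  Add new vertices `x = Sum.inr 0`, `v₁ = Sum.inr 1`,
`x₁ = Sum.inr 2`, `v₁' = Sum.inr 3` to a connected graph `H`, with two edges `e₀, e₁`
joining `x` to distinct vertices `c₀, c₁` of `H`, the edges `x v₁` and `v₁ b` with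
`b ∈ H`, two edges `e₀', e₁'` joining `x₁` to distinct vertices `d₀, d₁` of `H`, and the
edges `x₁ v₁'` and `v₁' b'` with `b' ∈ H`.  Then `rc(H') ≤ rc(H) + 2`. -/
theorem rc_case3b {V : Type*} (H : SimpleGraph V) (hH : H.Connected)
    (c₀ c₁ b d₀ d₁ b' : V) (hc : c₀ ≠ c₁) (hd : d₀ ≠ d₁) :
    rc (SimpleGraph.fromRel (fun u v : V ⊕ Fin 4 =>
        (∃ p q, u = Sum.inl p ∧ v = Sum.inl q ∧ H.Adj p q) ∨
        (u = Sum.inl c₀ ∧ v = Sum.inr 0) ∨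
        (u = Sum.inl c₁ ∧ v = Sum.inr 0) ∨
        (u = Sum.inr 0 ∧ v = Sum.inr 1) ∨
        (u = Sum.inr 1 ∧ v = Sum.inl b) ∨
        (u = Sum.inl d₀ ∧ v = Sum.inr 2) ∨
        (u = Sum.inl d₁ ∧ v = Sum.inr 2) ∨
        (u = Sum.inr 2 ∧ v = Sum.inr 3) ∨
        (u = Sum.inr 3 ∧ v = Sum.inl b'))) ≤ rc H + 2 := by
  have hHG : (SimpleGraph.fromRel (fun u v : V ⊕ Fin 4 =>
        (∃ p q, u = Sum.inl p ∧ v = Sum.inl q ∧ H.Adj p q) ∨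
        (u = Sum.inl c₀ ∧ v = Sum.inr 0) ∨
        (u = Sum.inl c₁ ∧ v = Sum.inr 0) ∨
        (u = Sum.inr 0 ∧ v = Sum.inr 1) ∨
        (u = Sum.inr 1 ∧ v = Sum.inl b) ∨
        (u = Sum.inl d₀ ∧ v = Sum.inr 2) ∨
        (u = Sum.inl d₁ ∧ v = Sum.inr 2) ∨
        (u = Sum.inr 2 ∧ v = Sum.inr 3) ∨
        (u = Sum.inr 3 ∧ v = Sum.inl b'))) = RC3B.HG H c₀ c₁ b d₀ d₁ b' := rfl
  rw [hHG]
  by_cases hS : {k : ℕ | ∃ c : Sym2 V → ℕ, (∀ e ∈ H.edgeSet, c e < k) ∧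
      ∀ u v : V, u ≠ v → ∃ p : H.Walk u v, p.IsPath ∧ (p.edges.map c).Nodup}.Nonempty
  · obtain ⟨cH, hb, hr⟩ := Nat.sInf_mem hS
    obtain ⟨c', hb', hr'⟩ := RC3B.lemA H c₀ c₁ b d₀ d₁ b' _ cH hb hr
    exact Nat.sInf_le ⟨c', hb', hr'⟩
  · have h0 : rc (RC3B.HG H c₀ c₁ b d₀ d₁ b') = 0 := by
      unfold rc
      rw [Nat.sInf_eq_zero]
      right
      rw [Set.eq_empty_iff_forall_notMem]
      rintro k ⟨c', hb', hr'⟩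
      obtain ⟨k', cH, hbk, hrk⟩ := RC3B.lemB H c₀ c₁ b d₀ d₁ b'
        (hH.preconnected c₁ c₀).some (hH.preconnected c₀ b).some
        (hH.preconnected d₁ d₀).some (hH.preconnected d₀ b').some k c' hb' hr'
      exact hS ⟨k', cH, hbk, hrk⟩
    rw [h0]
    exact Nat.zero_le _
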